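/- A graph G is Meyniel (every odd cycle of length at least five has at least two chords) if and only if the cone C(G) over G is Meyniel. -/

import Mathlib

/-- A graph is Meyniel if every odd cycle of length at least `5` has at least two
chords (edges of the graph joining two vertices of the cycle that are not edges of
the cycle). -/
def Meyniel {V : Type} (G : SimpleGraph V) : Prop :=
  ∀ (v : V) (w : G.Walk v v), w.IsCycle → Odd w.length → 5 ≤ w.length →
    ∃ e₁ e₂ : Sym2 V, e₁ ≠ e₂ ∧ e₁ ∈ G.edgeSet ∧ e₂ ∈ G.edgeSet ∧
      e₁ ∉ w.edges ∧ e₂ ∉ w.edges ∧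
      (∀ x ∈ e₁, x ∈ w.support) ∧ (∀ x ∈ e₂, x ∈ w.support)

private lemma exists_not_mem_aux {α : Type*} (l s : List α) (hn : l.Nodup)
    (h : s.length < l.length) : ∃ x ∈ l, x ∉ s := by
  by_contra h'
  push_neg at h'
  have : l.length ≤ s.length := ((hn.subperm h').length_le)
  omega

private def coneHom {V : Type} {G : SimpleGraph V} {H : SimpleGraph (Option V)}
    (hH₁ : ∀ a b : V, H.Adj (some a) (some b) ↔ G.Adj a b) : G →g H :=
  ⟨some, fun h => (hH₁ _ _).mpr h⟩

private lemma walk_lift {V : Type} {G : SimpleGraph V} {H : SimpleGraph (Option V)}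
    (hH₁ : ∀ a b : V, H.Adj (some a) (some b) ↔ G.Adj a b) :
    ∀ {x y : Option V} (p : H.Walk x y), (none ∉ p.support) →
      ∀ (a b : V) (hx : x = some a) (hy : y = some b),
        ∃ q : G.Walk a b, p.copy hx hy = q.map (coneHom hH₁) := by
  intro x y p
  induction p with
  | nil =>
    intro hns a b hx hy
    subst hx
    obtain rfl : a = b := Option.some.inj hy
    exact ⟨SimpleGraph.Walk.nil, by simp; rfl⟩
  | @cons x u y hadj p ih =>
    intro hns a b hx hy
    subst hx
    subst hy
    rw [SimpleGraph.Walk.support_cons, List.mem_cons] at hns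
    push_neg at hns
    obtain ⟨hxn, hpn⟩ := hns
    have hu : u ≠ none := fun h => hpn (h ▸ p.start_mem_support)
    obtain ⟨c, rfl⟩ := Option.ne_none_iff_exists'.mp hu
    obtain ⟨q, hq⟩ := ih hpn c b rfl rfl
    rw [SimpleGraph.Walk.copy_rfl_rfl] at hq
    have hadj' : G.Adj a c := (hH₁ a c).mp hadj
    exact ⟨SimpleGraph.Walk.cons hadj' q, by
      rw [SimpleGraph.Walk.copy_rfl_rfl, SimpleGraph.Walk.map_cons, ← hq]; rfl⟩

/-- `G` is Meyniel iff the cone `C(G)` over `G` is Meyniel. -/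
theorem stmt7 {V : Type} (G : SimpleGraph V) (H : SimpleGraph (Option V))
    (hH₁ : ∀ a b : V, H.Adj (some a) (some b) ↔ G.Adj a b)
    (hH₂ : ∀ a : V, H.Adj none (some a)) :
    Meyniel G ↔ Meyniel H := by
  classical
  set f : G →g H := coneHom hH₁ with hfdef
  have hfinj : Function.Injective f := fun a b h => Option.some.inj h
  have hs2inj : Function.Injective (Sym2.map f) := Sym2.map.injective hfinj
  constructor
  · -- G Meyniel → H Meyniel
    intro hG v w hw hodd hlen
    by_cases hnone : none ∈ w.support
    · -- cycle through the apex: two chords from `none`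
      -- rotate so the cycle starts at `none`
      set w' := w.rotate _ hnone with hw'
      have hcyc' : w'.IsCycle := hw.rotate hnone
      have hedges : ∀ e, e ∈ w'.edges ↔ e ∈ w.edges := fun e =>
        (w.rotate_edges _ hnone).perm.mem_iff
      have hsupp : ∀ x, x ∈ w'.support → x ∈ w.support := by
        intro x hx
        rcases List.mem_cons.mp (w'.support_eq_cons ▸ hx) with h | h
        · exact h ▸ hnone
        · exact List.tail_subset _ ((w.support_rotate _ hnone).perm.mem_iff.mp h)
      have hlen' : w'.length = w.length := by
        rw [← SimpleGraph.Walk.length_edges, ← SimpleGraph.Walk.length_edges]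
        exact (w.rotate_edges _ hnone).perm.length_eq
      clear_value w'
      -- decompose w' = cons h (q.concat h₂)
      cases w' with
      | nil => simp at hlen'; omega
      | cons hadj p =>
        rename_i u
        rcases p with _ | ⟨hadj2, p'⟩
        · simp at hlen'; omega
        rename_i u₂
        obtain ⟨b, q, h₂, hpe⟩ := SimpleGraph.Walk.exists_cons_eq_concat hadj2 p'
        rw [hpe] at hcyc' hedges hsupp hlen'
        -- support facts
        have hsupp_eq : (SimpleGraph.Walk.cons hadj (q.concat h₂)).support
            = none :: (q.support ++ [none]) := by
          simp [SimpleGraph.Walk.support_cons, SimpleGraph.Walk.support_concat]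
        have htail_nodup : (q.support ++ [none]).Nodup := by
          have := hcyc'.2
          rwa [hsupp_eq] at this
        have hqnodup : q.support.Nodup := (List.nodup_append.mp htail_nodup).1
        have hnonemem : none ∉ q.support := by
          have := (List.nodup_append.mp htail_nodup).2.2
          intro hc
          exact this none hc none (List.mem_singleton_self none) rfl
        have hqlen : 3 ≤ q.length := by
          have h1 : (SimpleGraph.Walk.cons hadj (q.concat h₂)).length = q.length + 2 := by
            simp [SimpleGraph.Walk.length_cons, SimpleGraph.Walk.length_concat]
          omega
        have hqs : q.support.length = q.length + 1 := SimpleGraph.Walk.length_support q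
        -- find two vertices distinct from u and b
        obtain ⟨x, hxs, hxm⟩ := exists_not_mem_aux q.support [u, b] hqnodup
          (by simp only [List.length_cons, List.length_nil, hqs]; omega)
        obtain ⟨y, hys, hym⟩ := exists_not_mem_aux q.support [u, b, x] hqnodup
          (by simp only [List.length_cons, List.length_nil, hqs]; omega)
        simp only [List.mem_cons, List.mem_singleton, not_or] at hxm hym
        have hxn : x ≠ none := fun h => hnonemem (h ▸ hxs)
        have hyn : y ≠ none := fun h => hnonemem (h ▸ hys)
        obtain ⟨xa, rfl⟩ := Option.ne_none_iff_exists'.mp hxn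
        obtain ⟨ya, rfl⟩ := Option.ne_none_iff_exists'.mp hyn
        -- edges of the cycle containing none are the first and last
        have hedge_chr : ∀ z : Option V, z ≠ u → z ≠ b → z ≠ none →
            s(none, z) ∉ (SimpleGraph.Walk.cons hadj (q.concat h₂)).edges := by
          intro z hzu hzb hzn hc
          rw [SimpleGraph.Walk.edges_cons, SimpleGraph.Walk.edges_concat] at hc
          rcases List.mem_cons.mp hc with h | h
          · rw [Sym2.eq_iff] at h
            rcases h with ⟨_, h⟩ | ⟨h1, h2⟩
            exacts [hzu h, hzn h2]
          · rw [List.concat_eq_append, List.mem_append] at h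
            rcases h with h | h
            · exact hnonemem (q.fst_mem_support_of_mem_edges h)
            · rw [List.mem_singleton, Sym2.eq_iff] at h
              rcases h with ⟨h3, h4⟩ | ⟨h3, h4⟩
              exacts [hzn h4, hzb h4]
        refine ⟨s(none, some xa), s(none, some ya), ?_, hH₂ xa, hH₂ ya, ?_, ?_, ?_, ?_⟩
        · intro h
          rw [Sym2.eq_iff] at h
          rcases h with ⟨_, h⟩ | ⟨h1, h2⟩
          · exact hym.2.2.1 h.symm
          · exact hxn h2
        · exact fun hc => hedge_chr _ hxm.1 hxm.2.1 hxn ((hedges _).mpr hc)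
        · exact fun hc => hedge_chr _ hym.1 hym.2.1 hyn ((hedges _).mpr hc)
        · intro z hz
          rw [Sym2.mem_iff] at hz
          refine hsupp z ?_
          rw [hsupp_eq]
          rcases hz with rfl | rfl
          · exact List.mem_cons_self
          · exact List.mem_cons_of_mem _ (List.mem_append_left _ hxs)
        · intro z hz
          rw [Sym2.mem_iff] at hz
          refine hsupp z ?_
          rw [hsupp_eq]
          rcases hz with rfl | rfl
          · exact List.mem_cons_self
          · exact List.mem_cons_of_mem _ (List.mem_append_left _ hys)
    · -- cycle avoiding the apex: pull back to G
      have hvn : v ≠ none := fun h => hnone (h ▸ w.start_mem_support)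
      obtain ⟨a, rfl⟩ := Option.ne_none_iff_exists'.mp hvn
      obtain ⟨q, hq⟩ := walk_lift hH₁ w hnone a a rfl rfl
      rw [SimpleGraph.Walk.copy_rfl_rfl] at hq
      subst hq
      have hq : q.IsCycle := (SimpleGraph.Walk.map_isCycle_iff_of_injective hfinj).mp hw
      replace hodd : Odd q.length := by convert hodd using 1; exact (SimpleGraph.Walk.length_map _ _).symm
      replace hlen : 5 ≤ q.length := by convert hlen using 1; exact (SimpleGraph.Walk.length_map _ _).symm
      obtain ⟨e₁, e₂, hne, he₁, he₂, hn₁, hn₂, hs₁, hs₂⟩ := hG a q hq hodd hlen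
      refine ⟨Sym2.map f e₁, Sym2.map f e₂, fun h => hne (hs2inj h), ?_, ?_, ?_, ?_, ?_, ?_⟩
      · induction e₁ using Sym2.ind with
        | _ x y => exact (hH₁ x y).mpr he₁
      · induction e₂ using Sym2.ind with
        | _ x y => exact (hH₁ x y).mpr he₂
      · show Sym2.map f e₁ ∉ (q.map f).edges
        rw [SimpleGraph.Walk.edges_map]
        intro hc
        obtain ⟨e, he, heq⟩ := List.mem_map.mp hc
        exact hn₁ (hs2inj heq ▸ he)
      · show Sym2.map f e₂ ∉ (q.map f).edges
        rw [SimpleGraph.Walk.edges_map]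
        intro hc
        obtain ⟨e, he, heq⟩ := List.mem_map.mp hc
        exact hn₂ (hs2inj heq ▸ he)
      · intro x hx
        obtain ⟨z, hz, rfl⟩ := Sym2.mem_map.mp hx
        show f z ∈ (q.map f).support
        rw [SimpleGraph.Walk.support_map]
        exact List.mem_map_of_mem (hs₁ z hz)
      · intro x hx
        obtain ⟨z, hz, rfl⟩ := Sym2.mem_map.mp hx
        show f z ∈ (q.map f).support
        rw [SimpleGraph.Walk.support_map]
        exact List.mem_map_of_mem (hs₂ z hz)
  · -- H Meyniel → G Meyniel
    intro hH v w hw hodd hlen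
    have hwc : (w.map f).IsCycle := hw.map hfinj
    obtain ⟨e₁, e₂, hne, he₁, he₂, hn₁, hn₂, hs₁, hs₂⟩ :=
      hH (f v) (w.map f) hwc (by rwa [SimpleGraph.Walk.length_map])
        (by rwa [SimpleGraph.Walk.length_map])
    -- every vertex of e₁, e₂ lies in the support, which consists of `some` vertices
    have hback : ∀ e : Sym2 (Option V), e ∈ H.edgeSet →
        (∀ x ∈ e, x ∈ (w.map f).support) →
        ∃ e' : Sym2 V, e = Sym2.map f e' ∧ e' ∈ G.edgeSet ∧
          (∀ x ∈ e', x ∈ w.support) := by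
      intro e hes hsup
      induction e using Sym2.ind with
      | _ x y =>
        have hx := hsup x (Sym2.mem_mk_left x y)
        have hy := hsup y (Sym2.mem_mk_right x y)
        rw [SimpleGraph.Walk.support_map] at hx hy
        obtain ⟨a, ha, rfl⟩ := List.mem_map.mp hx
        obtain ⟨b, hb, rfl⟩ := List.mem_map.mp hy
        refine ⟨s(a, b), rfl, (hH₁ a b).mp hes, ?_⟩
        intro z hz
        rw [Sym2.mem_iff] at hz
        rcases hz with rfl | rfl
        exacts [ha, hb]
    obtain ⟨e₁', he₁eq, he₁G, hs₁'⟩ := hback e₁ he₁ hs₁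
    obtain ⟨e₂', he₂eq, he₂G, hs₂'⟩ := hback e₂ he₂ hs₂
    refine ⟨e₁', e₂', ?_, he₁G, he₂G, ?_, ?_, hs₁', hs₂'⟩
    · rintro rfl
      exact hne (he₁eq.trans he₂eq.symm)
    · intro hc
      apply hn₁
      rw [SimpleGraph.Walk.edges_map, he₁eq]
      exact List.mem_map_of_mem hc
    · intro hc
      apply hn₂
      rw [SimpleGraph.Walk.edges_map, he₂eq]
      exact List.mem_map_of_mem hc
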